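/- Let F be a finite field with q elements and let k, s, t be integers with 1 ≤ k ≤ s ≤ t and t > k, and set ω = k. For every function g : F^{t−k} × F^{s−k} → F, the fraction of pairs (A, B) of feature sets with |A| = t, |B| = s, |A ∩ B| = k (equivalently, the probability for a uniformly random such pair) for which g(rec_k(A), rec_k(B)) ∈ (A ∪ B) ∖ (A ∩ B) is at most 2 · q^{t+s−2k} · C(q, k−1) · (t−k+1) / (C(q, t+s−k) · k). (This is the explicit bound proved for the case ω = k of Theorem 5.) -/

import Mathlib

open Polynomial Finset

/-- The characteristic polynomial of a finite subset `A` of a field: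
`χ_A(X) = ∏_{a ∈ A} (X - a)`. -/
noncomputable def charPoly {F : Type*} [Field F] (A : Finset F) : F[X] :=
  ∏ a ∈ A, (X - C a)

/-- The deterministic vault record of a feature set `A` of size `n` with
parameter `k`: the tuple of coefficients of `X^k, …, X^{n−1}` of `χ_A`. -/
noncomputable def vRec {F : Type*} [Field F] (n k : ℕ) (A : Finset F) :
    Fin (n - k) → F :=
  fun j => (charPoly A).coeff (k + (j : ℕ))

section Aux
set_option linter.unusedSectionVars false
set_option linter.unusedVariables false
variable {F : Type*} [Field F] [Fintype F] [DecidableEq F]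

lemma charPoly_natDegree (A : Finset F) : (charPoly A).natDegree = A.card := by
  unfold charPoly
  rw [Polynomial.natDegree_prod _ _ (fun a _ => X_sub_C_ne_zero a)]
  simp

lemma charPoly_monic (A : Finset F) : (charPoly A).Monic :=
  monic_prod_of_monic _ _ (fun a _ => monic_X_sub_C a)

lemma charPoly_inj {A B : Finset F} (h : charPoly A = charPoly B) : A = B := by
  have h2 := congrArg Polynomial.roots h
  rw [charPoly, charPoly, roots_prod_X_sub_C, roots_prod_X_sub_C] at h2
  exact Finset.val_inj.mp h2

lemma charPoly_root {A : Finset F} {x : F} (hx : x ∈ A) : (charPoly A).eval x = 0 := by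
  rw [charPoly, eval_prod]
  exact Finset.prod_eq_zero hx (by simp)

lemma diff_natDegree_le {k m : ℕ} (hk : 1 ≤ k) {A B : Finset F}
    (hA : A.card = m) (hB : B.card = m)
    (hrec : vRec m k A = vRec m k B) :
    (charPoly A - charPoly B).natDegree ≤ k - 1 := by
  rw [natDegree_le_iff_coeff_eq_zero]
  intro N hN
  have hkN : k ≤ N := by omega
  rw [Polynomial.coeff_sub, sub_eq_zero]
  rcases lt_trichotomy N m with h | h | h
  · have hj : N - k < m - k := by omega
    have h2 := congrFun hrec ⟨N - k, hj⟩
    simp only [vRec] at h2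
    have hNk : k + (N - k) = N := by omega
    rwa [hNk] at h2
  · subst h
    have h1 : (charPoly A).coeff N = 1 := by
      have := (charPoly_monic A).coeff_natDegree
      rwa [charPoly_natDegree, hA] at this
    have h2 : (charPoly B).coeff N = 1 := by
      have := (charPoly_monic B).coeff_natDegree
      rwa [charPoly_natDegree, hB] at this
    rw [h1, h2]
  · rw [coeff_eq_zero_of_natDegree_lt, coeff_eq_zero_of_natDegree_lt]
    · rw [charPoly_natDegree, hB]; exact h
    · rw [charPoly_natDegree, hA]; exact h

lemma card_inter_le {k m : ℕ} (hk : 1 ≤ k) {A B : Finset F}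
    (hA : A.card = m) (hB : B.card = m) (hne : A ≠ B)
    (hrec : vRec m k A = vRec m k B) : (A ∩ B).card ≤ k - 1 := by
  set d := charPoly A - charPoly B with hd
  have hd0 : d ≠ 0 := sub_ne_zero.mpr (fun h => hne (charPoly_inj h))
  have hdeg : d.natDegree ≤ k - 1 := diff_natDegree_le hk hA hB hrec
  have hsub : A ∩ B ⊆ d.roots.toFinset := by
    intro y hy
    rw [Multiset.mem_toFinset, mem_roots hd0]
    rw [mem_inter] at hy
    simp [hd, IsRoot, charPoly_root hy.1, charPoly_root hy.2]
  calc (A ∩ B).card ≤ d.roots.toFinset.card := card_le_card hsub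
    _ ≤ Multiset.card d.roots := Multiset.toFinset_card_le _
    _ ≤ d.natDegree := card_roots' d
    _ ≤ k - 1 := hdeg

lemma unique_ext {k m : ℕ} (hk : 1 ≤ k) {S A B : Finset F}
    (hS : S.card = k) (hSA : S ⊆ A) (hSB : S ⊆ B)
    (hA : A.card = m) (hB : B.card = m)
    (hrec : vRec m k A = vRec m k B) : A = B := by
  by_contra hne
  have hd0 : charPoly A - charPoly B ≠ 0 :=
    sub_ne_zero.mpr (fun h => hne (charPoly_inj h))
  have hdeg := diff_natDegree_le hk hA hB hrec
  have hdvd : charPoly S ∣ charPoly A - charPoly B :=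
    dvd_sub (Finset.prod_dvd_prod_of_subset _ _ _ hSA)
      (Finset.prod_dvd_prod_of_subset _ _ _ hSB)
  have h2 := Polynomial.natDegree_le_of_dvd hdvd hd0
  rw [charPoly_natDegree, hS] at h2
  omega

lemma card_mul_le_image {α β : Type*} [DecidableEq β] (s : Finset α) (f : α → β) (c C' : ℕ)
    (h : ∀ b, ((s.filter fun a => f a = b)).card * c ≤ C') :
    s.card * c ≤ (s.image f).card * C' := by
  rw [card_eq_sum_card_fiberwise (fun a ha => mem_image_of_mem f ha), sum_mul]
  calc ∑ b ∈ s.image f, (filter (fun a => f a = b) s).card * c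
      ≤ ∑ _b ∈ s.image f, C' := sum_le_sum fun b _ => h b
    _ = (s.image f).card * C' := by rw [sum_const, smul_eq_mul]

lemma count_mem_le {k m : ℕ} (hk : 1 ≤ k) (hkm : k ≤ m) (x : F) (r : Fin (m - k) → F) :
    (univ.filter fun B : Finset F => B.card = m ∧ vRec m k B = r ∧ x ∈ B).card
      * (m - 1).choose (k - 1) ≤ (Fintype.card F - 1).choose (k - 1) := by
  set 𝓑 := univ.filter fun B : Finset F => B.card = m ∧ vRec m k B = r ∧ x ∈ B with h𝓑
  have hmem : ∀ B ∈ 𝓑, B.card = m ∧ vRec m k B = r ∧ x ∈ B := by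
    intro B hB; simpa [h𝓑] using hB
  have hdisj : ∀ B ∈ 𝓑, ∀ B' ∈ 𝓑, B ≠ B' →
      Disjoint ((B.erase x).powersetCard (k-1)) ((B'.erase x).powersetCard (k-1)) := by
    intro B hB B' hB' hne
    obtain ⟨h1, h2, h3⟩ := hmem B hB
    obtain ⟨h1', h2', h3'⟩ := hmem B' hB'
    have hle := card_inter_le hk h1 h1' hne (h2.trans h2'.symm)
    have hx : x ∈ B ∩ B' := mem_inter.mpr ⟨h3, h3'⟩
    have hpos : 1 ≤ (B ∩ B').card := card_pos.mpr ⟨x, hx⟩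
    rw [Finset.disjoint_left]
    intro P hP hP'
    rw [mem_powersetCard] at hP hP'
    have hPsub : P ⊆ (B ∩ B').erase x := by
      intro a ha
      have u1 := hP.1 ha
      have u2 := hP'.1 ha
      rw [mem_erase] at u1 u2 ⊢
      exact ⟨u1.1, mem_inter.mpr ⟨u1.2, u2.2⟩⟩
    have hcP := card_le_card hPsub
    rw [card_erase_of_mem hx] at hcP
    omega
  have hcount := Finset.card_biUnion hdisj
  have hsum : ∑ B ∈ 𝓑, ((B.erase x).powersetCard (k-1)).card
      = 𝓑.card * (m-1).choose (k-1) := by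
    rw [Finset.sum_congr rfl (fun B hB => ?_), sum_const, smul_eq_mul]
    obtain ⟨h1, h2, h3⟩ := hmem B hB
    rw [card_powersetCard, card_erase_of_mem h3, h1]
  have hsubset : 𝓑.biUnion (fun B => (B.erase x).powersetCard (k-1))
      ⊆ (univ.erase x).powersetCard (k-1) := by
    intro P hP
    rw [Finset.mem_biUnion] at hP
    obtain ⟨B, _, hPB⟩ := hP
    rw [mem_powersetCard] at hPB ⊢
    exact ⟨hPB.1.trans (erase_subset_erase x (subset_univ B)), hPB.2⟩
  have hfinal := card_le_card hsubset
  rw [hcount, hsum] at hfinal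
  rwa [card_powersetCard, card_erase_of_mem (mem_univ x), card_univ] at hfinal

lemma le_choose : ∀ (n : ℕ), ∀ k, 1 ≤ k → k < n → n ≤ n.choose k := by
  intro n
  induction n with
  | zero => omega
  | succ m ih =>
    intro k h1 h2
    rcases eq_or_lt_of_le h1 with h | h
    · rw [← h, Nat.choose_one_right]
    · obtain ⟨j, rfl⟩ : ∃ j, k = j + 1 := ⟨k-1, by omega⟩
      rw [Nat.choose_succ_succ]
      have h1' := ih j (by omega) (by omega)
      have h2' : 1 ≤ m.choose (j+1) := Nat.choose_pos (by omega)
      simp only [Nat.succ_eq_add_one] at *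
      omega

lemma choose_mul_id {a b : ℕ} (h1 : 1 ≤ b) (h2 : b ≤ a) :
    a.choose b * b = a * (a-1).choose (b-1) := by
  have := Nat.add_one_mul_choose_eq (a-1) (b-1)
  have ha : a - 1 + 1 = a := by omega
  have hb : b - 1 + 1 = b := by omega
  rw [ha, hb] at this
  omega

lemma side_bound {k m m' : ℕ} (hk : 1 ≤ k) (hkm : k ≤ m)
    (G : (Fin (m' - k) → F) → (Fin (m - k) → F) → F) :
    (univ.filter fun p : Finset F × Finset F =>
        p.1.card = m' ∧ p.2.card = m ∧ (p.1 ∩ p.2).card = k ∧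
        G (vRec m' k p.1) (vRec m k p.2) ∈ p.2 \ p.1).card * (m - 1).choose (k - 1)
      ≤ (Fintype.card F ^ (m' - k) * Fintype.card F ^ (m - k))
          * (Fintype.card F - 1).choose (k - 1) * m.choose k := by
  classical
  set q := Fintype.card F with hq
  set bad := univ.filter fun p : Finset F × Finset F =>
        p.1.card = m' ∧ p.2.card = m ∧ (p.1 ∩ p.2).card = k ∧
        G (vRec m' k p.1) (vRec m k p.2) ∈ p.2 \ p.1 with hbad
  set Z : Finset ((Fin (m' - k) → F) × Finset F × Finset F) :=
    univ.filter (fun z => z.2.1.card = m ∧ G z.1 (vRec m k z.2.1) ∈ z.2.1 ∧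
      z.2.2 ⊆ z.2.1 ∧ z.2.2.card = k) with hZ
  -- step 1 : injection bad → Z
  have h1 : bad.card ≤ Z.card := by
    apply card_le_card_of_injOn (fun p => (vRec m' k p.1, p.2, p.1 ∩ p.2))
    · intro p hp
      simp only [hbad, mem_coe, mem_filter, mem_univ, true_and] at hp
      obtain ⟨hp1, hp2, hp3, hp4⟩ := hp
      rw [mem_sdiff] at hp4
      simp only [hZ, mem_coe, mem_filter, mem_univ, true_and]
      exact ⟨hp2, hp4.1, inter_subset_right, hp3⟩
    · intro p hp p' hp' heq
      simp only [hbad, coe_filter, Set.mem_setOf_eq, mem_univ, true_and] at hp hp'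
      have heq1 : vRec m' k p.1 = vRec m' k p'.1 := (Prod.ext_iff.mp heq).1
      have heq2 : p.2 = p'.2 := (Prod.ext_iff.mp (Prod.ext_iff.mp heq).2).1
      have heq3 : p.1 ∩ p.2 = p'.1 ∩ p'.2 := (Prod.ext_iff.mp (Prod.ext_iff.mp heq).2).2
      have hA : p.1 = p'.1 := by
        apply unique_ext hk (S := p.1 ∩ p.2) hp.2.2.1 inter_subset_left
          (by rw [heq3]; exact inter_subset_left) hp.1 hp'.1 heq1
      exact Prod.ext hA heq2
  -- step 2 : fibers over (r, B) have size ≤ C(m,k)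
  set π : (Fin (m' - k) → F) × Finset F × Finset F → (Fin (m' - k) → F) × Finset F :=
    fun z => (z.1, z.2.1) with hπ
  have h2 : Z.card * 1 ≤ (Z.image π).card * m.choose k := by
    apply card_mul_le_image
    intro w
    rw [mul_one]
    rcases (Z.filter fun z => π z = w).eq_empty_or_nonempty with he | ⟨z0, hz0⟩
    · simp [he]
    · have hz0' := hz0
      simp only [mem_filter, hZ, mem_univ, true_and, hπ] at hz0'
      have hw2 : w.2.card = m := by
        rw [← (congrArg Prod.snd hz0'.2 : z0.2.1 = w.2)]; exact hz0'.1.1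
      calc (Z.filter fun z => π z = w).card
          ≤ (w.2.powersetCard k).card := by
            apply card_le_card_of_injOn (fun z => z.2.2)
            · intro z hz
              simp only [mem_coe, mem_filter, hZ, mem_univ, true_and, hπ] at hz
              rw [mem_coe, mem_powersetCard]
              have h22 : z.2.1 = w.2 := (Prod.ext_iff.mp hz.2).2
              exact ⟨h22 ▸ hz.1.2.2.1, hz.1.2.2.2⟩
            · intro z hz z' hz' heq
              simp only [coe_filter, Set.mem_setOf_eq, hπ] at hz hz'
              have e1 : z.1 = w.1 := (Prod.ext_iff.mp hz.2).1
              have e1' : z'.1 = w.1 := (Prod.ext_iff.mp hz'.2).1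
              have e2 : z.2.1 = w.2 := (Prod.ext_iff.mp hz.2).2
              have e2' : z'.2.1 = w.2 := (Prod.ext_iff.mp hz'.2).2
              exact Prod.ext (e1.trans e1'.symm) (Prod.ext (e2.trans e2'.symm) heq)
        _ = m.choose k := by rw [card_powersetCard, hw2]
  -- step 3 : fibers over (r, vRec B)
  set W := Z.image π with hW
  set ρ : (Fin (m' - k) → F) × Finset F → (Fin (m' - k) → F) × (Fin (m - k) → F) :=
    fun w => (w.1, vRec m k w.2) with hρ
  have h3 : W.card * (m-1).choose (k-1) ≤ (W.image ρ).card * (q-1).choose (k-1) := by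
    apply card_mul_le_image
    intro w'
    calc (W.filter fun w => ρ w = w').card * (m-1).choose (k-1)
        ≤ (univ.filter fun B : Finset F =>
            B.card = m ∧ vRec m k B = w'.2 ∧ G w'.1 w'.2 ∈ B).card * (m-1).choose (k-1) := by
          apply Nat.mul_le_mul_right
          apply card_le_card_of_injOn (fun w => w.2)
          · intro w hw
            simp only [mem_coe, mem_filter, hW, Finset.mem_image, hρ] at hw
            obtain ⟨⟨z, hz, hzw⟩, hww⟩ := hw
            simp only [mem_filter, hZ, mem_univ, true_and, hπ] at hz
            have hzw1 : z.1 = w.1 := (Prod.ext_iff.mp hzw).1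
            have hzw2 : z.2.1 = w.2 := (Prod.ext_iff.mp hzw).2
            have hww1 : w.1 = w'.1 := (Prod.ext_iff.mp hww).1
            have hww2 : vRec m k w.2 = w'.2 := (Prod.ext_iff.mp hww).2
            simp only [mem_coe, mem_filter, mem_univ, true_and]
            refine ⟨hzw2 ▸ hz.1, hww2, ?_⟩
            have := hz.2.1
            rw [hzw1, hzw2, hww1] at this
            rwa [hww2] at this
          · intro w hw w' hw' heq
            simp only [coe_filter, Set.mem_setOf_eq, hρ] at hw hw'
            have e1 := (Prod.ext_iff.mp hw.2).1
            have e1' := (Prod.ext_iff.mp hw'.2).1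
            exact Prod.ext (e1.trans e1'.symm) heq
      _ ≤ (q-1).choose (k-1) := count_mem_le hk hkm (G w'.1 w'.2) w'.2
  have h4 : (W.image ρ).card ≤ q^(m'-k) * q^(m-k) := by
    calc (W.image ρ).card ≤ Fintype.card ((Fin (m'-k) → F) × (Fin (m-k) → F)) :=
          Finset.card_le_univ _
      _ = q^(m'-k) * q^(m-k) := by
          simp [Fintype.card_prod, Fintype.card_fun, hq]
  calc bad.card * (m-1).choose (k-1)
      ≤ Z.card * (m-1).choose (k-1) := Nat.mul_le_mul_right _ h1
    _ ≤ ((Z.image π).card * m.choose k) * (m-1).choose (k-1) := by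
        have := Nat.mul_le_mul_right ((m-1).choose (k-1)) h2
        rwa [mul_one] at this
    _ = (W.card * (m-1).choose (k-1)) * m.choose k := by rw [hW]; ring
    _ ≤ ((W.image ρ).card * (q-1).choose (k-1)) * m.choose k := Nat.mul_le_mul_right _ h3
    _ ≤ ((q^(m'-k) * q^(m-k)) * (q-1).choose (k-1)) * m.choose k := by
        apply Nat.mul_le_mul_right
        exact Nat.mul_le_mul_right _ h4

lemma den_lower {k s t : ℕ} (hks : k ≤ s) (hst : s ≤ t) :
    (Fintype.card F).choose (t+s-k) * (t+s-k).choose k ≤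
    (univ.filter fun p : Finset F × Finset F =>
      p.1.card = t ∧ p.2.card = s ∧ (p.1 ∩ p.2).card = k).card := by
  classical
  set n := t + s - k with hn
  set pk : Finset F → Finset F :=
    fun V => if h : t - k ≤ V.card then (Finset.exists_subset_card_eq h).choose else ∅ with hpk
  have hpk_spec : ∀ V : Finset F, t - k ≤ V.card → pk V ⊆ V ∧ (pk V).card = t - k := by
    intro V h
    rw [hpk]
    simp only [dif_pos h]
    obtain ⟨h1, h2⟩ := (Finset.exists_subset_card_eq h).choose_spec
    exact ⟨h1, h2⟩
  set X := ((univ : Finset F).powersetCard n).sigma (fun U => U.powersetCard k) with hX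
  have hXcard : X.card = (Fintype.card F).choose n * n.choose k := by
    rw [hX, card_sigma]
    rw [Finset.sum_congr rfl (fun U hU => ?_), sum_const, smul_eq_mul,
      card_powersetCard, card_univ]
    rw [mem_powersetCard] at hU
    rw [card_powersetCard, hU.2]
  rw [← hXcard]
  apply card_le_card_of_injOn
    (fun z => (z.2 ∪ pk (z.1 \ z.2), z.2 ∪ ((z.1 \ z.2) \ pk (z.1 \ z.2))))
  · rintro ⟨U, S⟩ hz
    simp only [hX, mem_coe, Finset.mem_sigma, mem_powersetCard, subset_univ, true_and] at hz
    obtain ⟨hU, hSU, hS⟩ := hz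
    have hVcard : (U \ S).card = n - k := by rw [card_sdiff_of_subset hSU, hU, hS]
    have htk : t - k ≤ (U \ S).card := by omega
    obtain ⟨hT1, hT2⟩ := hpk_spec (U \ S) htk
    set T := pk (U \ S)
    have hdisjST : Disjoint S T := by
      rw [Finset.disjoint_left]
      intro a haS haT
      exact (mem_sdiff.mp (hT1 haT)).2 haS
    have hdisjST' : Disjoint S ((U \ S) \ T) := by
      rw [Finset.disjoint_left]
      intro a haS haT
      exact (mem_sdiff.mp (mem_sdiff.mp haT).1).2 haS
    have hAcard : (S ∪ T).card = t := by
      rw [card_union_of_disjoint hdisjST, hS, hT2]; omega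
    have hBcard : (S ∪ ((U \ S) \ T)).card = s := by
      rw [card_union_of_disjoint hdisjST', hS, card_sdiff_of_subset hT1, hVcard, hT2]; omega
    have hinter : (S ∪ T) ∩ (S ∪ ((U \ S) \ T)) = S := by
      ext a
      simp only [mem_inter, mem_union, mem_sdiff]
      constructor
      · rintro ⟨h1 | h1, h2 | h2⟩ <;> first | exact h1 | exact h2 | tauto
      · intro h; exact ⟨Or.inl h, Or.inl h⟩
    simp only [mem_coe, mem_filter, mem_univ, true_and]
    exact ⟨hAcard, hBcard, by rw [hinter, hS]⟩
  · rintro ⟨U, S⟩ hz ⟨U', S'⟩ hz' heq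
    simp only [hX, coe_sigma, Set.mem_sigma_iff, mem_coe, mem_powersetCard, subset_univ,
      true_and] at hz hz'
    obtain ⟨hU, hSU, hS⟩ := hz
    obtain ⟨hU', hSU', hS'⟩ := hz'
    have hVcard : (U \ S).card = n - k := by rw [card_sdiff_of_subset hSU, hU, hS]
    have hVcard' : (U' \ S').card = n - k := by rw [card_sdiff_of_subset hSU', hU', hS']
    obtain ⟨hT1, hT2⟩ := hpk_spec (U \ S) (by omega)
    obtain ⟨hT1', hT2'⟩ := hpk_spec (U' \ S') (by omega)
    have e1 : S ∪ pk (U \ S) = S' ∪ pk (U' \ S') := (Prod.ext_iff.mp heq).1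
    have e2 : S ∪ ((U \ S) \ pk (U \ S)) = S' ∪ ((U' \ S') \ pk (U' \ S')) :=
      (Prod.ext_iff.mp heq).2
    -- intersections give S = S'
    have hinter : ∀ (U₀ S₀ : Finset F), S₀ ⊆ U₀ → pk (U₀ \ S₀) ⊆ U₀ \ S₀ →
        (S₀ ∪ pk (U₀ \ S₀)) ∩ (S₀ ∪ ((U₀ \ S₀) \ pk (U₀ \ S₀))) = S₀ := by
      intro U₀ S₀ hsub hpsub
      ext a
      simp only [mem_inter, mem_union, mem_sdiff]
      constructor
      · rintro ⟨h1 | h1, h2 | h2⟩ <;> first | exact h1 | exact h2 | tauto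
      · intro h; exact ⟨Or.inl h, Or.inl h⟩
    have hSeq : S = S' := by
      have := hinter U S hSU hT1
      have h2 := hinter U' S' hSU' hT1'
      rw [← this, ← h2, e1, e2]
    -- unions give U = U'
    have hunion : ∀ (U₀ S₀ : Finset F), S₀ ⊆ U₀ → pk (U₀ \ S₀) ⊆ U₀ \ S₀ →
        (S₀ ∪ pk (U₀ \ S₀)) ∪ (S₀ ∪ ((U₀ \ S₀) \ pk (U₀ \ S₀))) = U₀ := by
      intro U₀ S₀ hsub hpsub
      rw [union_union_union_comm, union_self,
        union_sdiff_of_subset hpsub, union_sdiff_of_subset hsub]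
    have hUeq : U = U' := by
      have := hunion U S hSU hT1
      have h2 := hunion U' S' hSU' hT1'
      rw [← this, ← h2, e1, e2]
    subst hSeq
    subst hUeq
    rfl

end Aux

/-- The case `ω = k` of Theorem 5: the probability (over uniformly random pairs
of feature sets of sizes `t`, `s` overlapping in `k` elements) that `g`
extracts an element of `(A ∪ B) ∖ (A ∩ B)` from the two deterministic vault
records is at most `2·q^{t+s−2k}·C(q,k−1)·(t−k+1) / (C(q,t+s−k)·k)`. -/
theorem stmt12 {F : Type*} [Field F] [Fintype F] [DecidableEq F]
    (k s t : ℕ) (hk : 1 ≤ k) (hks : k ≤ s) (hst : s ≤ t) (htk : k < t)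
    (g : ((Fin (t - k) → F) × (Fin (s - k) → F)) → F) :
    (Set.ncard { p : Finset F × Finset F |
        p.1.card = t ∧ p.2.card = s ∧ (p.1 ∩ p.2).card = k ∧
        g (vRec t k p.1, vRec s k p.2) ∈ (p.1 ∪ p.2) \ (p.1 ∩ p.2) } : ℚ)
      / (Set.ncard { p : Finset F × Finset F |
          p.1.card = t ∧ p.2.card = s ∧ (p.1 ∩ p.2).card = k } : ℚ)
      ≤ ((2 * (Fintype.card F) ^ (t + s - 2 * k)
            * (Fintype.card F).choose (k - 1) * (t - k + 1) : ℕ) : ℚ)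
        / (((Fintype.card F).choose (t + s - k) * k : ℕ) : ℚ) := by
  classical
  set q := Fintype.card F with hq
  set denF := univ.filter (fun p : Finset F × Finset F =>
    p.1.card = t ∧ p.2.card = s ∧ (p.1 ∩ p.2).card = k) with hdenF
  set numF := univ.filter (fun p : Finset F × Finset F =>
    p.1.card = t ∧ p.2.card = s ∧ (p.1 ∩ p.2).card = k ∧
    g (vRec t k p.1, vRec s k p.2) ∈ (p.1 ∪ p.2) \ (p.1 ∩ p.2)) with hnumF
  have hdset : Set.ncard { p : Finset F × Finset F |
      p.1.card = t ∧ p.2.card = s ∧ (p.1 ∩ p.2).card = k } = denF.card := by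
    rw [← Set.ncard_coe_finset]
    congr 1
    ext p
    simp [hdenF]
  have hnset : Set.ncard { p : Finset F × Finset F |
      p.1.card = t ∧ p.2.card = s ∧ (p.1 ∩ p.2).card = k ∧
      g (vRec t k p.1, vRec s k p.2) ∈ (p.1 ∪ p.2) \ (p.1 ∩ p.2) } = numF.card := by
    rw [← Set.ncard_coe_finset]
    congr 1
    ext p
    simp [hnumF]
  rw [hdset, hnset]
  -- bad sets
  set bad1 := univ.filter (fun p : Finset F × Finset F =>
    p.1.card = t ∧ p.2.card = s ∧ (p.1 ∩ p.2).card = k ∧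
    g (vRec t k p.1, vRec s k p.2) ∈ p.1 \ p.2) with hbad1
  set bad2 := univ.filter (fun p : Finset F × Finset F =>
    p.1.card = t ∧ p.2.card = s ∧ (p.1 ∩ p.2).card = k ∧
    g (vRec t k p.1, vRec s k p.2) ∈ p.2 \ p.1) with hbad2
  have hsplit : numF.card ≤ bad1.card + bad2.card := by
    refine le_trans (card_le_card ?_) (card_union_le _ _)
    intro p hp
    simp only [hnumF, hbad1, hbad2, mem_filter, mem_univ, true_and, mem_union,
      mem_sdiff, mem_inter] at hp ⊢
    obtain ⟨h1, h2, h3, h4, h5⟩ := hp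
    rcases h4 with h4 | h4
    · by_cases hB : g (vRec t k p.1, vRec s k p.2) ∈ p.2
      · exact absurd ⟨h4, hB⟩ h5
      · exact Or.inl ⟨h1, h2, h3, h4, hB⟩
    · by_cases hA : g (vRec t k p.1, vRec s k p.2) ∈ p.1
      · exact absurd ⟨hA, h4⟩ h5
      · exact Or.inr ⟨h1, h2, h3, h4, hA⟩
  set Q := q^(t-k) * q^(s-k) with hQ
  set Cq1 := (q-1).choose (k-1) with hCq1
  set Cq := q.choose (k-1) with hCq
  -- bound bad2
  have hb2 := side_bound (k := k) (m := s) (m' := t) hk hks (fun rA rB => g (rA, rB))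
  have hposCs : 0 < (s-1).choose (k-1) := Nat.choose_pos (by omega)
  have hb2' : bad2.card * k ≤ Q * Cq1 * s := by
    apply Nat.le_of_mul_le_mul_right _ hposCs
    calc bad2.card * k * ((s-1).choose (k-1))
        = (bad2.card * (s-1).choose (k-1)) * k := by ring
      _ ≤ (Q * Cq1 * s.choose k) * k := Nat.mul_le_mul_right _ hb2
      _ = Q * Cq1 * (s.choose k * k) := by ring
      _ = Q * Cq1 * (s * (s-1).choose (k-1)) := by rw [choose_mul_id hk hks]
      _ = Q * Cq1 * s * ((s-1).choose (k-1)) := by ring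
  -- bound bad1 via swap
  set bad1s := univ.filter (fun p : Finset F × Finset F =>
    p.1.card = s ∧ p.2.card = t ∧ (p.1 ∩ p.2).card = k ∧
    (fun rB rA => g (rA, rB)) (vRec s k p.1) (vRec t k p.2) ∈ p.2 \ p.1) with hbad1s
  have hswap : bad1.card ≤ bad1s.card := by
    apply card_le_card_of_injOn (fun p => (p.2, p.1))
    · intro p hp
      simp only [hbad1, mem_coe, mem_filter, mem_univ, true_and] at hp
      simp only [hbad1s, mem_coe, mem_filter, mem_univ, true_and]
      exact ⟨hp.2.1, hp.1, by rw [inter_comm]; exact hp.2.2.1, hp.2.2.2⟩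
    · intro p _ p' _ heq
      have e1 : p.2 = p'.2 := (Prod.ext_iff.mp heq).1
      have e2 : p.1 = p'.1 := (Prod.ext_iff.mp heq).2
      exact Prod.ext e2 e1
  have hb1s := side_bound (k := k) (m := t) (m' := s) hk (hks.trans hst)
    (fun rB rA => g (rA, rB))
  have hposCt : 0 < (t-1).choose (k-1) := Nat.choose_pos (by omega)
  have hb1' : bad1.card * k ≤ Q * Cq1 * t := by
    apply Nat.le_of_mul_le_mul_right _ hposCt
    calc bad1.card * k * ((t-1).choose (k-1))
        = (bad1.card * (t-1).choose (k-1)) * k := by ring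
      _ ≤ (bad1s.card * (t-1).choose (k-1)) * k := by
          exact Nat.mul_le_mul_right _ (Nat.mul_le_mul_right _ hswap)
      _ ≤ ((q^(s-k) * q^(t-k)) * Cq1 * t.choose k) * k := Nat.mul_le_mul_right _ hb1s
      _ = Q * Cq1 * (t.choose k * k) := by rw [hQ]; ring
      _ = Q * Cq1 * (t * (t-1).choose (k-1)) := by rw [choose_mul_id hk (hks.trans hst)]
      _ = Q * Cq1 * t * ((t-1).choose (k-1)) := by ring
  -- combine
  have hCq1Cq : Cq1 ≤ Cq := Nat.choose_le_choose _ (Nat.sub_le q 1)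
  have hnum_k : numF.card * k ≤ 2 * (Q * Cq * t) := by
    calc numF.card * k ≤ (bad1.card + bad2.card) * k := Nat.mul_le_mul_right _ hsplit
      _ = bad1.card * k + bad2.card * k := by ring
      _ ≤ Q * Cq1 * t + Q * Cq1 * s := Nat.add_le_add hb1' hb2'
      _ ≤ Q * Cq * t + Q * Cq * t := by
          apply Nat.add_le_add
          · exact Nat.mul_le_mul_right _ (Nat.mul_le_mul_left _ hCq1Cq)
          · exact Nat.mul_le_mul (Nat.mul_le_mul_left _ hCq1Cq) hst
      _ = 2 * (Q * Cq * t) := by ring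
  -- denominator bound
  have hden_ge : q.choose (t+s-k) * (t+s-k).choose k ≤ denF.card := den_lower hks hst
  have htn : t ≤ (t+s-k).choose k := by
    have h1 := le_choose (t+s-k) k hk (by omega)
    omega
  have hdenQ : t * q.choose (t+s-k) ≤ denF.card := by
    calc t * q.choose (t+s-k) ≤ (t+s-k).choose k * q.choose (t+s-k) :=
          Nat.mul_le_mul_right _ htn
      _ = q.choose (t+s-k) * (t+s-k).choose k := by ring
      _ ≤ denF.card := hden_ge
  -- final
  by_cases hd0 : denF.card = 0
  · rw [hd0]
    simp only [Nat.cast_zero, div_zero]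
    positivity
  · have hdpos : 0 < denF.card := Nat.pos_of_ne_zero hd0
    have hqn : 0 < q.choose (t+s-k) := by
      obtain ⟨p, hp⟩ := Finset.card_pos.mp hdpos
      simp only [hdenF, mem_filter, mem_univ, true_and] at hp
      have hu := card_union_add_card_inter p.1 p.2
      have hle : (p.1 ∪ p.2).card ≤ q := by
        rw [hq, ← card_univ (α := F)]
        exact card_le_card (subset_univ _)
      exact Nat.choose_pos (by omega)
    have key : numF.card * (q.choose (t+s-k) * k)
        ≤ (2 * q^(t+s-2*k) * Cq * (t-k+1)) * denF.card := by
      have hpow : q^(t+s-2*k) = q^(t-k) * q^(s-k) := by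
        rw [← pow_add]
        congr 1
        omega
      calc numF.card * (q.choose (t+s-k) * k)
          = (numF.card * k) * q.choose (t+s-k) := by ring
        _ ≤ (2 * (Q * Cq * t)) * q.choose (t+s-k) := Nat.mul_le_mul_right _ hnum_k
        _ = 2 * Q * Cq * (t * q.choose (t+s-k)) := by ring
        _ ≤ 2 * Q * Cq * denF.card := Nat.mul_le_mul_left _ hdenQ
        _ ≤ (2 * q^(t+s-2*k) * Cq * (t-k+1)) * denF.card := by
            rw [hpow, hQ]
            have h1 : 1 ≤ t - k + 1 := by omega
            calc 2 * (q^(t-k) * q^(s-k)) * Cq * denF.card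
                = (2 * (q^(t-k) * q^(s-k)) * Cq * 1) * denF.card := by ring
              _ ≤ (2 * (q^(t-k) * q^(s-k)) * Cq * (t-k+1)) * denF.card := by
                  apply Nat.mul_le_mul_right
                  exact Nat.mul_le_mul_left _ h1
    rw [div_le_div_iff₀ (by exact_mod_cast hdpos) (by positivity)]
    exact_mod_cast key
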